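/- Let τ₁ ∈ [0,1) and θ ∈ (0, (1 − 2τ₁ + √((1−2τ₁)² + 4(1−τ₁)))/(2(1−τ₁))). Then the symmetric 2×2 matrix θ·[[1 − τ₁, (1 − θ)(1 − τ₁)], [(1 − θ)(1 − τ₁), 2 − θ − τ₁]] is positive definite. -/

import Mathlib

theorem stmt_11 (τ₁ θ : ℝ) (h0 : 0 ≤ τ₁) (h1 : τ₁ < 1) (hθ0 : 0 < θ)
    (hθ : θ < (1 - 2 * τ₁ + Real.sqrt ((1 - 2 * τ₁) ^ 2 + 4 * (1 - τ₁))) /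
      (2 * (1 - τ₁))) :
    (θ • !![1 - τ₁, (1 - θ) * (1 - τ₁); (1 - θ) * (1 - τ₁), 2 - θ - τ₁]).PosDef := by
  set a := 1 - τ₁ with ha
  have ha0 : 0 < a := by simp [ha]; linarith
  -- from hθ derive a*θ^2 - (1-2τ₁)*θ - 1 < 0
  have hs : Real.sqrt ((1 - 2 * τ₁) ^ 2 + 4 * (1 - τ₁)) ^ 2
      = (1 - 2 * τ₁) ^ 2 + 4 * (1 - τ₁) := by
    apply Real.sq_sqrt; nlinarith
  have hsnn : 0 ≤ Real.sqrt ((1 - 2 * τ₁) ^ 2 + 4 * (1 - τ₁)) := Real.sqrt_nonneg _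
  have hkey : a * θ ^ 2 - (1 - 2 * τ₁) * θ - 1 < 0 := by
    have h2 : 2 * (1 - τ₁) * θ < 1 - 2 * τ₁ + Real.sqrt ((1 - 2 * τ₁) ^ 2 + 4 * (1 - τ₁)) := by
      rw [div_eq_mul_inv] at hθ
      have := (lt_div_iff₀ (by linarith : (0:ℝ) < 2 * (1 - τ₁))).mp (by rwa [div_eq_mul_inv])
      linarith
    have h3 : 1 - 2 * τ₁ < Real.sqrt ((1 - 2 * τ₁) ^ 2 + 4 * (1 - τ₁)) := by
      nlinarith [hs, hsnn]
    nlinarith [mul_pos (show (0:ℝ) < 1 - 2*τ₁ + Real.sqrt ((1 - 2 * τ₁) ^ 2 + 4 * (1 - τ₁)) - 2*a*θ by rw [ha]; linarith)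
      (show (0:ℝ) < 2*a*θ - (1 - 2*τ₁) + Real.sqrt ((1 - 2 * τ₁) ^ 2 + 4 * (1 - τ₁)) by
        nlinarith [mul_pos ha0 hθ0]), hs, ha0]
  rw [Matrix.posDef_iff_dotProduct_mulVec]
  constructor
  · ext i j
    fin_cases i <;> fin_cases j <;>
      simp [Matrix.conjTranspose_apply]
  · intro x hx
    have hx0 : x 0 ≠ 0 ∨ x 1 ≠ 0 := by
      by_contra h
      push_neg at h
      exact hx (funext fun i => by fin_cases i <;> simp [h.1, h.2])
    simp only [Matrix.mulVec, dotProduct, Fin.sum_univ_two, Matrix.smul_apply,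
      Matrix.cons_val', Matrix.cons_val_zero, Matrix.cons_val_one, Matrix.head_cons,
      Matrix.empty_val', Matrix.cons_val_fin_one, Matrix.head_fin_const, smul_eq_mul,
      Pi.star_apply, star_trivial]
    simp only [Matrix.of_apply, Matrix.cons_val_zero, Matrix.cons_val_one, Matrix.head_cons,
      Matrix.cons_val', Matrix.empty_val', Matrix.cons_val_fin_one, Matrix.head_fin_const]
    have hdet : a * (2 - θ - τ₁) - ((1 - θ) * a) ^ 2 > 0 := by
      have e : a * (2 - θ - τ₁) - ((1 - θ) * a) ^ 2
          = a * (1 + (1 - 2 * τ₁) * θ - a * θ ^ 2) := by rw [ha]; ring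
      rw [e]; exact mul_pos ha0 (by linarith)
    rcases eq_or_ne (x 1) 0 with h1' | h1'
    · have h0' : x 0 ≠ 0 := by
        rcases hx0 with h | h
        · exact h
        · exact absurd h1' h
      rw [h1']
      nlinarith [mul_pos (mul_pos hθ0 ha0) (sq_pos_of_ne_zero h0')]
    · nlinarith [mul_nonneg hθ0.le (sq_nonneg (a * x 0 + (1 - θ) * a * x 1)),
        mul_pos hθ0 (mul_pos hdet (sq_pos_of_ne_zero h1')), ha0,
        mul_pos ha0 hθ0]
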